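/- Let B^H = {b ∈ B : b◁ω = ε(ω)b for all ω} be the subalgebra of H-invariant elements of B. For each fixed ω ∈ H, the maps ω_* : C^n_H(B) → C^n(B^H) defined by (ω_* f)(b₀ ⊗ ⋯ ⊗ bₙ) = f(ω ⊗ b₀ ⊗ ⋯ ⊗ bₙ) form a morphism of cocyclic objects from the equivariant cocyclic object of B to the standard cocyclic object of the algebra B^H (i.e. ω_* commutes with the cyclic operators, cofaces and codegeneracies). -/

import Mathlib

open scoped TensorProduct

noncomputable section

/-- A Hopf `ℂ`-algebra with invertible antipode, together with a chosen finite
(Sweedler) representation of the comultiplication: `Δ ω = ∑_{p ∈ Δl ω} p.1 ⊗ p.2`. -/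
structure HopfData (H : Type) [Ring H] [HopfAlgebra ℂ H] where
  /-- the inverse of the antipode -/
  Sinv : H →ₗ[ℂ] H
  Sinv_antipode : ∀ ω : H, Sinv (HopfAlgebra.antipode (R := ℂ) ω) = ω
  antipode_Sinv : ∀ ω : H, HopfAlgebra.antipode (R := ℂ) (Sinv ω) = ω
  /-- a chosen list representation of the comultiplication -/
  Δl : H → List (H × H)
  Δl_repr : ∀ ω : H,
    (Coalgebra.comul (R := ℂ) ω : H ⊗[ℂ] H) = ((Δl ω).map fun p => p.1 ⊗ₜ[ℂ] p.2).sum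

variable {H : Type} [Ring H] [HopfAlgebra ℂ H]

/-- the counit, as a `ℂ`-valued function -/
def epsi (ω : H) : ℂ := Coalgebra.counit (R := ℂ) ω

/-- Iterated Sweedler decomposition: `sw n ω` represents
`Δⁿ ω = ∑_v v 0 ⊗ ⋯ ⊗ v n`, where `Δⁿ = (ι ⊗ Δ) Δ^{n-1}`. -/
def HopfData.sw (D : HopfData H) : (n : ℕ) → H → List (Fin (n + 1) → H)
  | 0, ω => [fun _ => ω]
  | n + 1, ω =>
    (D.sw n ω).flatMap fun v =>
      (D.Δl (v (Fin.last n))).map fun p =>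
        Fin.snoc (Function.update v (Fin.last n) p.1) p.2

/-- A right `H`-module structure (over `ℂ`), recorded as the antihomomorphism
`act : H → End(B)`, so `act ω b` stands for `b ◁ ω`. -/
structure RAct (H : Type) [Ring H] [HopfAlgebra ℂ H] (B : Type) [AddCommGroup B]
    [Module ℂ B] where
  act : H →ₗ[ℂ] B →ₗ[ℂ] B
  act_one : act 1 = LinearMap.id
  act_mul : ∀ ω η : H, act (ω * η) = (act η) ∘ₗ (act ω)

/-- A unital right `H`-module algebra structure on `B`:
`(b₁ b₂) ◁ ω = ∑ (b₁ ◁ ω₍₀₎)(b₂ ◁ ω₍₁₎)` and `1 ◁ ω = ε(ω) 1`. -/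
structure MAlg (D : HopfData H) (B : Type) [Ring B] [Algebra ℂ B] extends RAct H B where
  act_mul_mul : ∀ (ω : H) (b₁ b₂ : B),
    act ω (b₁ * b₂) = ((D.Δl ω).map fun p => act p.1 b₁ * act p.2 b₂).sum
  act_algOne : ∀ ω : H, act ω (1 : B) = epsi ω • (1 : B)


/-- the action as a plain function: `fn ω b = b ◁ ω` -/
def RAct.fn {H : Type} [Ring H] [HopfAlgebra ℂ H] {B : Type} [AddCommGroup B] [Module ℂ B]
    (A : RAct H B) : H → B → B := fun ω x => A.act ω x

/-- the action of a module algebra as a plain function -/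
def MAlg.fn {H : Type} [Ring H] [HopfAlgebra ℂ H] {B : Type} [Ring B] [Algebra ℂ B]
    {D : HopfData H} (A : MAlg D B) : H → B → B := A.toRAct.fn

/-- The space of `ℂ`-valued functions of one `H`-variable and `n+1` `B`-variables;
(multi)linear such functions correspond to linear functionals on `H ⊗ B^{⊗(n+1)}`. -/
abbrev Raw (H B : Type) (n : ℕ) := H → (Fin (n + 1) → B) → ℂ

section Raw

variable {H : Type} [Ring H] [HopfAlgebra ℂ H] {B : Type} [Ring B] [Algebra ℂ B] {n : ℕ}

/-- `f` is linear in the `H`-variable and in each `B`-variable separately, i.e. `f`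
is (the restriction of) a linear functional on `H ⊗ B^{⊗(n+1)}`. -/
def IsML (f : Raw H B n) : Prop :=
  (∀ ω η b, f (ω + η) b = f ω b + f η b) ∧
  (∀ (c : ℂ) ω b, f (c • ω) b = c * f ω b) ∧
  (∀ ω b (i : Fin (n + 1)) (x y : B),
    f ω (Function.update b i (x + y)) =
      f ω (Function.update b i x) + f ω (Function.update b i y)) ∧
  (∀ ω b (i : Fin (n + 1)) (c : ℂ) (x : B),
    f ω (Function.update b i (c • x)) = c * f ω (Function.update b i x))

/-- `H`-invariance of the functional `f` on `H ⊗ B^{⊗(n+1)}`: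
`(ω ▷ f)(η ⊗ b₀ ⊗ ⋯ ⊗ bₙ) = f(S⁻¹(ω₍₀₎) η ω₍₁₎ ⊗ b₀ ◁ ω₍₂₎ ⊗ ⋯ ⊗ bₙ ◁ ω₍ₙ₊₂₎)`
equals `ε(ω) f(η ⊗ b₀ ⊗ ⋯ ⊗ bₙ)`. -/
def IsInv (D : HopfData H) (act : H → B → B) (f : Raw H B n) : Prop :=
  ∀ (ω η : H) (b : Fin (n + 1) → B),
    ((D.sw (n + 2) ω).map fun v =>
        f (D.Sinv (v 0) * η * v 1) fun i => act (v i.succ.succ) (b i)).sum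
      = epsi ω * f η b

/-- membership in the equivariant cochain space `C^n_H(B)` -/
def InC (D : HopfData H) (act : H → B → B) (f : Raw H B n) : Prop :=
  IsML f ∧ IsInv D act f

/-- the cyclic operator
`(tₙ f)(ω ⊗ b₀ ⊗ ⋯ ⊗ bₙ) = f(ω₍₀₎ ⊗ bₙ ◁ ω₍₁₎ ⊗ b₀ ⊗ ⋯ ⊗ b_{n-1})` -/
def tRaw (D : HopfData H) (act : H → B → B) (f : Raw H B n) : Raw H B n :=
  fun ω b =>
    ((D.Δl ω).map fun p =>
      f p.1 (Fin.cons (act p.2 (b (Fin.last n))) fun i : Fin n => b i.castSucc)).sum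

/-- merging the `i`-th and `(i+1)`-st entries of a `(n+2)`-tuple by multiplication -/
def contract (i : Fin (n + 1)) (b : Fin (n + 2) → B) : Fin (n + 1) → B :=
  fun j =>
    if (j : ℕ) < (i : ℕ) then b j.castSucc
    else if (j : ℕ) = (i : ℕ) then b j.castSucc * b j.succ
    else b j.succ

/-- the coface operators `dⁿᵢ : C^{n} → C^{n+1}` (`i < n+1` multiplies adjacent entries;
the last one is `d_{n+1} = t ∘ d₀`) -/
def dRaw (D : HopfData H) (act : H → B → B) (i : Fin (n + 2)) (f : Raw H B n) :
    Raw H B (n + 1) :=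
  if h : (i : ℕ) < n + 1 then fun ω b => f ω (contract ⟨i, h⟩ b)
  else tRaw D act fun ω b => f ω (contract 0 b)

/-- the codegeneracy operators `sⁿᵢ : C^{n+1} → C^n`, inserting a `1` after the `i`-th entry -/
def sRaw (i : Fin (n + 1)) (f : Raw H B (n + 1)) : Raw H B n :=
  fun ω b => f ω (Fin.insertNth i.succ 1 b)

/-- the Hochschild coboundary `b = ∑ (-1)ⁱ dᵢ` -/
def bRaw (D : HopfData H) (act : H → B → B) (f : Raw H B n) : Raw H B (n + 1) :=
  fun ω b => ∑ i : Fin (n + 2), ((-1 : ℂ) ^ (i : ℕ)) * dRaw D act i f ω b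

/-- cyclicity: `λ f = (-1)ⁿ tₙ f = f` -/
def IsCyc (D : HopfData H) (act : H → B → B) (f : Raw H B n) : Prop :=
  ∀ ω b, ((-1 : ℂ) ^ n) * tRaw D act f ω b = f ω b

/-- an `n`-cocycle of the cyclic complex `(Ker(1-λ), b)` computing `HC^n_H(B)` -/
def IsCocycle (D : HopfData H) (act : H → B → B) (f : Raw H B n) : Prop :=
  InC D act f ∧ IsCyc D act f ∧ ∀ ω b, bRaw D act f ω b = 0

end Raw

/-- merging the top and bottom entries: the standard last coface
`(dₙ g)(b₀ ⊗ ⋯ ⊗ bₙ) = g(bₙ b₀ ⊗ b₁ ⊗ ⋯ ⊗ b_{n-1})`, together with the inner ones -/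
def stdCon {B : Type} [Ring B] {n : ℕ} (i : Fin (n + 2)) (b : Fin (n + 2) → B) :
    Fin (n + 1) → B :=
  if h : (i : ℕ) < n + 1 then contract ⟨i, h⟩ b
  else Fin.cons (b (Fin.last (n + 1)) * b 0) fun j : Fin n => b j.succ.castSucc


section AuxProof

variable {H : Type} [Ring H] [HopfAlgebra ℂ H] {B : Type} [Ring B] [Algebra ℂ B] {n : ℕ}

lemma HopfData.sum_counit_smul (D : HopfData H) (ω : H) :
    ((D.Δl ω).map fun p => epsi p.2 • p.1).sum = ω := by
  have h := congrArg (TensorProduct.rid ℂ H).toLinearMap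
      (Coalgebra.lTensor_counit_comul (R := ℂ) ω)
  rw [D.Δl_repr ω, map_list_sum, map_list_sum, List.map_map, List.map_map] at h
  simpa [Function.comp_def, epsi, TensorProduct.rid_tmul] using h

lemma HopfData.counit_second (D : HopfData H) (L : H →ₗ[ℂ] ℂ) (ω : H) :
    ((D.Δl ω).map fun p => epsi p.2 * L p.1).sum = L ω := by
  conv_rhs => rw [← D.sum_counit_smul ω]
  rw [map_list_sum, List.map_map]
  refine congrArg List.sum (List.map_congr_left fun p _ => ?_)
  simp [Function.comp, smul_eq_mul]

/-- the functional `ω ↦ f ω g` as a linear map, for `f` multilinear -/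
def IsML.lmap {f : Raw H B n} (hf : IsML f) (g : Fin (n + 1) → B) : H →ₗ[ℂ] ℂ where
  toFun ω := f ω g
  map_add' := fun ω η => hf.1 ω η g
  map_smul' := fun c ω => hf.2.1 c ω g

lemma IsML.sum_eval {f : Raw H B n} (hf : IsML f) (D : HopfData H) (ω : H)
    (g : Fin (n + 1) → B) :
    ((D.Δl ω).map fun p => epsi p.2 * f p.1 g).sum = f ω g :=
  D.counit_second (hf.lmap g) ω

lemma IsML.cons_smul {f : Raw H B n} (hf : IsML f) (ω : H) (c : ℂ) (x : B)
    (t : Fin n → B) :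
    f ω (Fin.cons (c • x) t) = c * f ω (Fin.cons x t) := by
  have h1 : Fin.cons (c • x) t = Function.update (Fin.cons x t : Fin (n + 1) → B) 0 (c • x) := by
    rw [Fin.update_cons_zero]
  rw [h1, hf.2.2.2 ω (Fin.cons x t) 0 c x, Fin.update_cons_zero]

lemma contract_zero_cons (x : B) (b : Fin (n + 2) → B) :
    contract 0 (Fin.cons x fun i : Fin (n + 1) => b i.castSucc) =
      Fin.cons (x * b 0) fun j : Fin n => b j.succ.castSucc := by
  funext j
  refine Fin.cases ?_ (fun j' => ?_) j
  · simp [contract]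
  · have h0 : ¬ ((j'.succ : Fin (n + 1)) : ℕ) < ((0 : Fin (n + 1)) : ℕ) := by simp
    have h1 : ¬ ((j'.succ : Fin (n + 1)) : ℕ) = ((0 : Fin (n + 1)) : ℕ) := by simp
    simp [contract, h0, h1]

end AuxProof

/-- for each fixed `ω ∈ H`, the maps
`(ω_* f)(b₀ ⊗ ⋯ ⊗ bₙ) = f(ω ⊗ b₀ ⊗ ⋯ ⊗ bₙ)` constitute a morphism of cocyclic
objects from the equivariant cocyclic object of `B` to the standard cocyclic object
of the invariant subalgebra `B^H`: on tuples of `H`-invariant elements of `B`, the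
equivariant operators `tₙ`, `dⁿᵢ`, `sⁿᵢ` are computed by the standard (Connes)
cyclic operator, cofaces and codegeneracies. -/
theorem evaluation_is_cocyclic_morphism
    {H : Type} [Ring H] [HopfAlgebra ℂ H] (D : HopfData H)
    {B : Type} [Ring B] [Algebra ℂ B] (A : MAlg D B) :
    (∀ (n : ℕ) (f : Raw H B n), InC D A.fn f →
      ∀ (ω : H) (b : Fin (n + 1) → B), (∀ i ω', A.fn ω' (b i) = epsi ω' • b i) →
        tRaw D A.fn f ω b =
          f ω (Fin.cons (b (Fin.last n)) fun i : Fin n => b i.castSucc)) ∧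
    (∀ (n : ℕ) (f : Raw H B n), InC D A.fn f →
      ∀ (i : Fin (n + 2)) (ω : H) (b : Fin (n + 2) → B),
        (∀ j ω', A.fn ω' (b j) = epsi ω' • b j) →
          dRaw D A.fn i f ω b = f ω (stdCon i b)) ∧
    (∀ (n : ℕ) (f : Raw H B (n + 1)), InC D A.fn f →
      ∀ (i : Fin (n + 1)) (ω : H) (b : Fin (n + 1) → B),
        (∀ j ω', A.fn ω' (b j) = epsi ω' • b j) →
          sRaw i f ω b = f ω (Fin.insertNth i.succ 1 b)) := by
  refine ⟨?_, ?_, ?_⟩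
  · -- cyclic operator
    intro n f hf ω b hb
    unfold tRaw
    have key : (fun p : H × H =>
        f p.1 (Fin.cons (A.fn p.2 (b (Fin.last n))) fun i : Fin n => b i.castSucc)) =
        fun p : H × H =>
          epsi p.2 * f p.1 (Fin.cons (b (Fin.last n)) fun i : Fin n => b i.castSucc) := by
      funext p
      rw [hb (Fin.last n) p.2, hf.1.cons_smul]
    rw [key, hf.1.sum_eval D]
  · -- coface operators
    intro n f hf i ω b hb
    by_cases h : (i : ℕ) < n + 1
    · simp only [dRaw, stdCon, dif_pos h]
    · simp only [dRaw, stdCon, dif_neg h]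
      unfold tRaw
      have key : (fun p : H × H =>
          f p.1 (contract 0 (Fin.cons (A.fn p.2 (b (Fin.last (n + 1))))
            fun i : Fin (n + 1) => b i.castSucc))) =
          fun p : H × H =>
            epsi p.2 * f p.1 (Fin.cons (b (Fin.last (n + 1)) * b 0)
              fun j : Fin n => b j.succ.castSucc) := by
        funext p
        rw [contract_zero_cons, hb (Fin.last (n + 1)) p.2, smul_mul_assoc,
          hf.1.cons_smul]
      rw [key, hf.1.sum_eval D]
  · -- codegeneracies
    intro n f hf i ω b hb
    rfl


end
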